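/- For every edit operation ed ∈ {substitution, insertion, deletion}, the worst-case additive sensitivity of LZ78 satisfies AS_ed(z_78, n) = Ω(n): for infinitely many n there exist strings T of length n and T' with edit distance 1 from T such that z_78(T') − z_78(T) ≥ n/7. -/

import Mathlib

def IsLZ78 {α : Type*} (T : List α) (fs : List (List α)) : Prop :=
  fs.flatten = T ∧ ∀ (k : ℕ) (hk : k < fs.length),
    fs.get ⟨k, hk⟩ ≠ [] ∧
    ((fs.get ⟨k, hk⟩).dropLast = [] ∨ (fs.get ⟨k, hk⟩).dropLast ∈ fs.take k) ∧
    (k + 1 = fs.length ∨ fs.get ⟨k, hk⟩ ∉ fs.take k)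


def lzF2 (j : ℕ) : List ℕ := if j % 2 = 0 then [3*(j/2)+1] else [3*(j/2)+1, 3*(j/2)+2]
def lzG (j : ℕ) : List ℕ := if j % 2 = 0 then [3*(j/2)+2] else [3*(j/2)+3, 3*(j/2)+4]

def seg1 (q : ℕ) : List (List ℕ) := (List.range (q+1)).map (fun i => [3*i+3])
def seg2 (q : ℕ) : List (List ℕ) := (List.range (2*q+2)).map lzF2
def seg3 (q : ℕ) : List (List ℕ) := (List.range (q+1)).map (fun i => [3*i+1,3*i+2,3*i+3])
def segT (q : ℕ) : List (List ℕ) := (List.range (2*q+1)).map lzG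

theorem mem_seg1 {q : ℕ} {x : List ℕ} (h : x ∈ seg1 q) : ∃ i ≤ q, x = [3*i+3] := by
  simp [seg1] at h; obtain ⟨i, hi, rfl⟩ := h; exact ⟨i, by omega, rfl⟩

theorem mem_seg2 {q : ℕ} {x : List ℕ} (h : x ∈ seg2 q) :
    ∃ i ≤ q, x = [3*i+1] ∨ x = [3*i+1, 3*i+2] := by
  simp [seg2] at h
  obtain ⟨j, hj, rfl⟩ := h
  refine ⟨j/2, by omega, ?_⟩
  rcases Nat.even_or_odd j with he | ho
  · left; simp [lzF2, Nat.even_iff.mp he]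
  · right; simp [lzF2, Nat.odd_iff.mp ho]

theorem mem_segT {q : ℕ} {x : List ℕ} (h : x ∈ segT q) :
    (∃ i ≤ q, x = [3*i+2]) ∨ (∃ i < q, x = [3*i+3, 3*i+4]) := by
  simp [segT] at h
  obtain ⟨j, hj, rfl⟩ := h
  rcases Nat.even_or_odd j with he | ho
  · left; exact ⟨j/2, by omega, by simp [lzG, Nat.even_iff.mp he]⟩
  · right
    refine ⟨j/2, by have := Nat.odd_iff.mp ho; omega, by simp [lzG, Nat.odd_iff.mp ho]⟩

theorem mem_seg3 {q : ℕ} {x : List ℕ} (h : x ∈ seg3 q) : ∃ i ≤ q, x = [3*i+1,3*i+2,3*i+3] := by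
  simp [seg3] at h; obtain ⟨i, hi, rfl⟩ := h; exact ⟨i, by omega, rfl⟩

theorem nd_seg1 (q : ℕ) : (seg1 q).Nodup :=
  List.Nodup.map_on (fun x _ y _ h => by simp at h; omega) List.nodup_range

theorem nd_seg2 (q : ℕ) : (seg2 q).Nodup := by
  refine List.Nodup.map_on (fun x _ y _ h => ?_) List.nodup_range
  rcases Nat.even_or_odd x with hx | hx <;> rcases Nat.even_or_odd y with hy | hy <;>
    simp [lzF2, Nat.even_iff.mp, Nat.odd_iff.mp, hx, hy] at h ⊢ <;>
    first
    | (have hx' := Nat.even_iff.mp hx; have hy' := Nat.even_iff.mp hy; omega)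
    | (have hx' := Nat.even_iff.mp hx; have hy' := Nat.odd_iff.mp hy; omega)
    | (have hx' := Nat.odd_iff.mp hx; have hy' := Nat.even_iff.mp hy; omega)
    | (have hx' := Nat.odd_iff.mp hx; have hy' := Nat.odd_iff.mp hy; omega)

theorem nd_seg3 (q : ℕ) : (seg3 q).Nodup :=
  List.Nodup.map_on (fun x _ y _ h => by simp at h; omega) List.nodup_range

theorem nd_segT (q : ℕ) : (segT q).Nodup := by
  refine List.Nodup.map_on (fun x _ y _ h => ?_) List.nodup_range
  rcases Nat.even_or_odd x with hx | hx <;> rcases Nat.even_or_odd y with hy | hy <;>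
    simp [lzG, Nat.even_iff.mp, Nat.odd_iff.mp, hx, hy] at h ⊢ <;>
    first
    | (have hx' := Nat.even_iff.mp hx; have hy' := Nat.even_iff.mp hy; omega)
    | (have hx' := Nat.even_iff.mp hx; have hy' := Nat.odd_iff.mp hy; omega)
    | (have hx' := Nat.odd_iff.mp hx; have hy' := Nat.even_iff.mp hy; omega)
    | (have hx' := Nat.odd_iff.mp hx; have hy' := Nat.odd_iff.mp hy; omega)

def fs0 (q : ℕ) : List (List ℕ) := seg1 q ++ seg2 q ++ seg3 q
def fsS (q : ℕ) : List (List ℕ) := seg1 q ++ seg2 q ++ [[0]] ++ segT q ++ [[3*q+3]]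
def fsI (q : ℕ) : List (List ℕ) := seg1 q ++ seg2 q ++ [[1,1]] ++ segT q ++ [[3*q+3]]
def fsD (q : ℕ) : List (List ℕ) := seg1 q ++ seg2 q ++ segT q ++ [[3*q+3]]



theorem range_add2 (n : ℕ) : List.range (n+2) = List.range n ++ [n, n+1] := by
  rw [List.range_add]; simp [List.range_succ]
theorem range_add3 (n : ℕ) : List.range (n+3) = List.range n ++ [n, n+1, n+2] := by
  rw [List.range_add]; simp [List.range_succ]

theorem segT_flatten (q : ℕ) : (segT q).flatten = (List.range (3*q+1)).map (fun j => j+2) := by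
  induction q with
  | zero => simp [segT]; rfl
  | succ q ih =>
    have h1 : 2*(q+1)+1 = (2*q+1) + 2 := by ring
    have h2 : 3*(q+1)+1 = (3*q+1) + 3 := by ring
    rw [segT, h1, h2, range_add2, range_add3]
    simp only [List.map_append, List.flatten_append]
    rw [show (List.map lzG (List.range (2*q+1))).flatten = (segT q).flatten from rfl, ih]
    have g1 : lzG (2*q+1) = [3*q+3, 3*q+4] := by
      have e1 : (2*q+1) % 2 = 1 := by omega
      have e2 : (2*q+1) / 2 = q := by omega
      simp [lzG, e1, e2]
    have g2 : lzG (2*q+1+1) = [3*q+5] := by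
      have e1 : (2*q+1+1) % 2 = 0 := by omega
      have e2 : (2*q+1+1) / 2 = q+1 := by omega
      simp [lzG, e1, e2]; omega
    simp [g1, g2]

theorem seg3_flatten (q : ℕ) : (seg3 q).flatten = (List.range (3*q+3)).map (fun j => j+1) := by
  induction q with
  | zero => simp [seg3]; rfl
  | succ q ih =>
    have h2 : 3*(q+1)+3 = (3*q+3) + 3 := by ring
    rw [seg3, show q+1+1 = (q+1)+1 from rfl, List.range_succ, h2, range_add3]
    simp only [List.map_append, List.flatten_append]
    rw [show (List.map (fun i => [3*i+1,3*i+2,3*i+3]) (List.range (q+1))).flatten = (seg3 q).flatten from rfl, ih]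
    simp
    omega

theorem mapC (n : ℕ) : (List.range (n+1)).map (fun j => j+1) = 1 :: (List.range n).map (fun j => j+2) := by
  rw [List.range_succ_eq_map]
  simp [List.map_map, Function.comp]

theorem seg3_eq (q : ℕ) : (seg3 q).flatten = 1 :: ((segT q).flatten ++ [3*q+3]) := by
  rw [seg3_flatten, segT_flatten]
  rw [show 3*q+3 = (3*q+2)+1 from rfl, mapC, show 3*q+2 = (3*q+1)+1 from rfl, List.range_succ]
  simp




-- disjointness helper
theorem disj12 (q : ℕ) : (seg1 q).Disjoint (seg2 q) := by
  intro x h1 h2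
  obtain ⟨i, hi, rfl⟩ := mem_seg1 h1
  obtain ⟨j, hj, h⟩ := mem_seg2 h2
  rcases h with h | h <;> simp at h <;> omega

theorem disj13 (q : ℕ) : (seg1 q).Disjoint (seg3 q) := by
  intro x h1 h2
  obtain ⟨i, hi, rfl⟩ := mem_seg1 h1
  obtain ⟨j, hj, h⟩ := mem_seg3 h2
  simp at h

theorem disj1T (q : ℕ) : (seg1 q).Disjoint (segT q) := by
  intro x h1 h2
  obtain ⟨i, hi, rfl⟩ := mem_seg1 h1
  rcases mem_segT h2 with ⟨j, hj, h⟩ | ⟨j, hj, h⟩ <;> simp at h <;> omega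

theorem disj23 (q : ℕ) : (seg2 q).Disjoint (seg3 q) := by
  intro x h1 h2
  obtain ⟨i, hi, h⟩ := mem_seg2 h1
  obtain ⟨j, hj, rfl⟩ := mem_seg3 h2
  rcases h with h | h <;> simp at h

theorem disj2T (q : ℕ) : (seg2 q).Disjoint (segT q) := by
  intro x h1 h2
  obtain ⟨i, hi, h⟩ := mem_seg2 h1
  rcases mem_segT h2 with ⟨j, hj, h2'⟩ | ⟨j, hj, h2'⟩ <;> rcases h with h | h <;>
    subst h <;> simp at h2' <;> omega

theorem nd_fs0 (q : ℕ) : (fs0 q).Nodup := by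
  rw [fs0, List.append_assoc, List.nodup_append, List.nodup_append]
  refine ⟨nd_seg1 q, ⟨nd_seg2 q, nd_seg3 q, List.disjoint_iff_ne.mp (disj23 q)⟩, List.disjoint_iff_ne.mp ?_⟩
  intro x h1 h2
  rcases List.mem_append.mp h2 with h2 | h2
  · exact disj12 q h1 h2
  · exact disj13 q h1 h2

theorem dropLast_fsS (q : ℕ) : (fsS q).dropLast = seg1 q ++ seg2 q ++ [[0]] ++ segT q := by
  rw [fsS]; exact List.dropLast_concat

theorem dropLast_fsI (q : ℕ) : (fsI q).dropLast = seg1 q ++ seg2 q ++ [[1,1]] ++ segT q := by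
  rw [fsI]; exact List.dropLast_concat

theorem dropLast_fsD (q : ℕ) : (fsD q).dropLast = seg1 q ++ seg2 q ++ segT q := by
  rw [fsD]; exact List.dropLast_concat

theorem nd_fsS' (q : ℕ) : (seg1 q ++ seg2 q ++ [[0]] ++ segT q).Nodup := by
  rw [List.append_assoc, List.append_assoc, List.nodup_append, List.nodup_append, List.nodup_append]
  refine ⟨nd_seg1 q, ⟨nd_seg2 q, ⟨by simp, nd_segT q, List.disjoint_iff_ne.mp ?_⟩, List.disjoint_iff_ne.mp ?_⟩, List.disjoint_iff_ne.mp ?_⟩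
  · intro x hx; simp at hx; subst hx
    intro h; rcases mem_segT h with ⟨j, hj, h⟩ | ⟨j, hj, h⟩ <;> simp at h
  · intro x hx h
    rcases List.mem_append.mp h with h | h
    · simp at h; subst h
      obtain ⟨i, hi, h⟩ := mem_seg2 hx
      rcases h with h | h <;> simp at h
    · exact disj2T q hx h
  · intro x hx h
    rcases List.mem_append.mp h with h | h
    · exact disj12 q hx h
    rcases List.mem_append.mp h with h | h
    · simp at h; subst h
      obtain ⟨i, hi, h⟩ := mem_seg1 hx
      simp at h
    · exact disj1T q hx h

theorem nd_fsI' (q : ℕ) : (seg1 q ++ seg2 q ++ [[1,1]] ++ segT q).Nodup := by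
  rw [List.append_assoc, List.append_assoc, List.nodup_append, List.nodup_append, List.nodup_append]
  refine ⟨nd_seg1 q, ⟨nd_seg2 q, ⟨by simp, nd_segT q, List.disjoint_iff_ne.mp ?_⟩, List.disjoint_iff_ne.mp ?_⟩, List.disjoint_iff_ne.mp ?_⟩
  · intro x hx; simp at hx; subst hx
    intro h; rcases mem_segT h with ⟨j, hj, h⟩ | ⟨j, hj, h⟩ <;> simp at h
  · intro x hx h
    rcases List.mem_append.mp h with h | h
    · simp at h; subst h
      obtain ⟨i, hi, h⟩ := mem_seg2 hx
      rcases h with h | h <;> simp at h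
    · exact disj2T q hx h
  · intro x hx h
    rcases List.mem_append.mp h with h | h
    · exact disj12 q hx h
    rcases List.mem_append.mp h with h | h
    · simp at h; subst h
      obtain ⟨i, hi, h⟩ := mem_seg1 hx
      simp at h
    · exact disj1T q hx h

theorem nd_fsD' (q : ℕ) : (seg1 q ++ seg2 q ++ segT q).Nodup := by
  rw [List.append_assoc, List.nodup_append, List.nodup_append]
  refine ⟨nd_seg1 q, ⟨nd_seg2 q, nd_segT q, List.disjoint_iff_ne.mp (disj2T q)⟩, List.disjoint_iff_ne.mp ?_⟩
  intro x hx h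
  rcases List.mem_append.mp h with h | h
  · exact disj12 q hx h
  · exact disj1T q hx h


@[simp] theorem len_seg1 (q : ℕ) : (seg1 q).length = q+1 := by simp [seg1]
@[simp] theorem len_seg2 (q : ℕ) : (seg2 q).length = 2*q+2 := by simp [seg2]
@[simp] theorem len_seg3 (q : ℕ) : (seg3 q).length = q+1 := by simp [seg3]
@[simp] theorem len_segT (q : ℕ) : (segT q).length = 2*q+1 := by simp [segT]
theorem len_fs0 (q : ℕ) : (fs0 q).length = 4*q+4 := by simp [fs0]; ring
theorem len_fsS (q : ℕ) : (fsS q).length = 5*q+6 := by simp [fsS]; ring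
theorem len_fsI (q : ℕ) : (fsI q).length = 5*q+6 := by simp [fsI]; ring
theorem len_fsD (q : ℕ) : (fsD q).length = 5*q+5 := by simp [fsD]; ring

theorem g_seg1 (q i : ℕ) (h : i < q+1) : (seg1 q)[i]'(by simp; try omega) = [3*i+3] := by
  simp [seg1]
theorem g_seg2 (q j : ℕ) (h : j < 2*q+2) : (seg2 q)[j]'(by simp; try omega) = lzF2 j := by
  simp [seg2]
theorem g_seg3 (q i : ℕ) (h : i < q+1) : (seg3 q)[i]'(by simp; try omega) = [3*i+1,3*i+2,3*i+3] := by
  simp [seg3]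
theorem g_segT (q j : ℕ) (h : j < 2*q+1) : (segT q)[j]'(by simp; try omega) = lzG j := by
  simp [segT]

-- fs0 getters
theorem fs0_g1 (q k : ℕ) (h : k < q+1) : (fs0 q)[k]'(by rw [len_fs0]; omega) = [3*k+3] := by
  simp only [fs0]; rw [List.getElem_append_left (by simp; try omega), List.getElem_append_left (by simp; try omega)]
  exact g_seg1 q k h
theorem fs0_g2 (q j : ℕ) (h : j < 2*q+2) : (fs0 q)[q+1+j]'(by rw [len_fs0]; omega) = lzF2 j := by
  simp only [fs0]; rw [List.getElem_append_left (by simp; try omega), List.getElem_append_right (by simp; try omega)]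
  have e : q+1+j - (seg1 q).length = j := by simp; try omega
  simp only [e]
  exact g_seg2 q j h
theorem fs0_g3 (q i : ℕ) (h : i < q+1) : (fs0 q)[3*q+3+i]'(by rw [len_fs0]; omega) = [3*i+1,3*i+2,3*i+3] := by
  simp only [fs0]; rw [List.getElem_append_right (by simp; try omega)]
  have e : 3*q+3+i - (seg1 q ++ seg2 q).length = i := by simp; try omega
  simp only [e]
  exact g_seg3 q i h

-- fsS getters
theorem fsS_g1 (q k : ℕ) (h : k < q+1) : (fsS q)[k]'(by rw [len_fsS]; omega) = [3*k+3] := by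
  simp only [fsS]
  rw [List.getElem_append_left (by simp; try omega), List.getElem_append_left (by simp; try omega),
    List.getElem_append_left (by simp; try omega), List.getElem_append_left (by simp; try omega)]
  exact g_seg1 q k h
theorem fsS_g2 (q j : ℕ) (h : j < 2*q+2) : (fsS q)[q+1+j]'(by rw [len_fsS]; omega) = lzF2 j := by
  simp only [fsS]
  rw [List.getElem_append_left (by simp; try omega), List.getElem_append_left (by simp; try omega),
    List.getElem_append_left (by simp; try omega), List.getElem_append_right (by simp; try omega)]
  have e : q+1+j - (seg1 q).length = j := by simp
  simp only [e]
  exact g_seg2 q j h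
theorem fsS_gd (q : ℕ) : (fsS q)[3*q+3]'(by rw [len_fsS]; omega) = [0] := by
  simp only [fsS]
  rw [List.getElem_append_left (by simp; try omega), List.getElem_append_left (by simp; try omega),
    List.getElem_append_right (by simp; try omega)]
  simp
theorem fsS_gT (q j : ℕ) (h : j < 2*q+1) : (fsS q)[3*q+4+j]'(by rw [len_fsS]; omega) = lzG j := by
  simp only [fsS]
  rw [List.getElem_append_left (by simp; try omega), List.getElem_append_right (by simp; try omega)]
  have e : 3*q+4+j - (seg1 q ++ seg2 q ++ [[0]]).length = j := by simp; omega
  simp only [e]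
  exact g_segT q j h
theorem fsS_gl (q : ℕ) : (fsS q)[5*q+5]'(by rw [len_fsS]; omega) = [3*q+3] := by
  simp only [fsS]
  rw [List.getElem_append_right (by simp; try omega)]
  simp

-- fsI getters
theorem fsI_g1 (q k : ℕ) (h : k < q+1) : (fsI q)[k]'(by rw [len_fsI]; omega) = [3*k+3] := by
  simp only [fsI]
  rw [List.getElem_append_left (by simp; try omega), List.getElem_append_left (by simp; try omega),
    List.getElem_append_left (by simp; try omega), List.getElem_append_left (by simp; try omega)]
  exact g_seg1 q k h
theorem fsI_g2 (q j : ℕ) (h : j < 2*q+2) : (fsI q)[q+1+j]'(by rw [len_fsI]; omega) = lzF2 j := by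
  simp only [fsI]
  rw [List.getElem_append_left (by simp; try omega), List.getElem_append_left (by simp; try omega),
    List.getElem_append_left (by simp; try omega), List.getElem_append_right (by simp; try omega)]
  have e : q+1+j - (seg1 q).length = j := by simp
  simp only [e]
  exact g_seg2 q j h
theorem fsI_gd (q : ℕ) : (fsI q)[3*q+3]'(by rw [len_fsI]; omega) = [1,1] := by
  simp only [fsI]
  rw [List.getElem_append_left (by simp; try omega), List.getElem_append_left (by simp; try omega),
    List.getElem_append_right (by simp; try omega)]
  simp
theorem fsI_gT (q j : ℕ) (h : j < 2*q+1) : (fsI q)[3*q+4+j]'(by rw [len_fsI]; omega) = lzG j := by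
  simp only [fsI]
  rw [List.getElem_append_left (by simp; try omega), List.getElem_append_right (by simp; try omega)]
  have e : 3*q+4+j - (seg1 q ++ seg2 q ++ [[1,1]]).length = j := by simp; omega
  simp only [e]
  exact g_segT q j h
theorem fsI_gl (q : ℕ) : (fsI q)[5*q+5]'(by rw [len_fsI]; omega) = [3*q+3] := by
  simp only [fsI]
  rw [List.getElem_append_right (by simp; try omega)]
  simp

-- fsD getters
theorem fsD_g1 (q k : ℕ) (h : k < q+1) : (fsD q)[k]'(by rw [len_fsD]; omega) = [3*k+3] := by
  simp only [fsD]
  rw [List.getElem_append_left (by simp; try omega), List.getElem_append_left (by simp; try omega),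
    List.getElem_append_left (by simp; try omega)]
  exact g_seg1 q k h
theorem fsD_g2 (q j : ℕ) (h : j < 2*q+2) : (fsD q)[q+1+j]'(by rw [len_fsD]; omega) = lzF2 j := by
  simp only [fsD]
  rw [List.getElem_append_left (by simp; try omega), List.getElem_append_left (by simp; try omega),
    List.getElem_append_right (by simp; try omega)]
  have e : q+1+j - (seg1 q).length = j := by simp
  simp only [e]
  exact g_seg2 q j h
theorem fsD_gT (q j : ℕ) (h : j < 2*q+1) : (fsD q)[3*q+3+j]'(by rw [len_fsD]; omega) = lzG j := by
  simp only [fsD]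
  rw [List.getElem_append_left (by simp; try omega), List.getElem_append_right (by simp; try omega)]
  have e : 3*q+3+j - (seg1 q ++ seg2 q).length = j := by simp; omega
  simp only [e]
  exact g_segT q j h
theorem fsD_gl (q : ℕ) : (fsD q)[5*q+4]'(by rw [len_fsD]; omega) = [3*q+3] := by
  simp only [fsD]
  rw [List.getElem_append_right (by simp; try omega)]
  simp


theorem lzF2_even (i : ℕ) : lzF2 (2*i) = [3*i+1] := by
  have h1 : (2*i) % 2 = 0 := by omega
  have h2 : (2*i) / 2 = i := by omega
  simp [lzF2, h1, h2]
theorem lzF2_odd (i : ℕ) : lzF2 (2*i+1) = [3*i+1, 3*i+2] := by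
  have h1 : (2*i+1) % 2 = 1 := by omega
  have h2 : (2*i+1) / 2 = i := by omega
  simp [lzF2, h1, h2]
theorem lzG_even (i : ℕ) : lzG (2*i) = [3*i+2] := by
  have h1 : (2*i) % 2 = 0 := by omega
  have h2 : (2*i) / 2 = i := by omega
  simp [lzG, h1, h2]
theorem lzG_odd (i : ℕ) : lzG (2*i+1) = [3*i+3, 3*i+4] := by
  have h1 : (2*i+1) % 2 = 1 := by omega
  have h2 : (2*i+1) / 2 = i := by omega
  simp [lzG, h1, h2]

theorem mem_take_of_getElem (l : List (List ℕ)) (j k : ℕ) (hj : j < l.length) (hjk : j < k) :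
    l[j] ∈ l.take k := by
  have h : j < (l.take k).length := by simp; omega
  have : (l.take k)[j] = l[j] := List.getElem_take
  rw [← this]; exact List.getElem_mem h

theorem novelty_of_dropLast_nodup (fs : List (List ℕ)) (h : fs.dropLast.Nodup) (k : ℕ) (hk : k < fs.length) :
    k + 1 = fs.length ∨ fs[k] ∉ fs.take k := by
  rcases Nat.eq_or_lt_of_le hk with he | hl
  · left; omega
  · right
    intro hmem
    rw [List.mem_take_iff_getElem] at hmem
    obtain ⟨j, hj, hje⟩ := hmem
    have hj1 : j < k := by simp at hj; omega
    have hjl : j < fs.length := by omega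
    have hkd : k < fs.dropLast.length := by simp [List.length_dropLast]; omega
    have hjd : j < fs.dropLast.length := by simp [List.length_dropLast]; omega
    have e1 : fs.dropLast[j] = fs.dropLast[k] := by
      rw [List.getElem_dropLast, List.getElem_dropLast]
      exact hje
    have := List.Nodup.getElem_inj_iff h |>.mp e1
    omega

theorem lz0 (q : ℕ) : IsLZ78 ((fs0 q).flatten) (fs0 q) := by
  refine ⟨rfl, fun k hk => ?_⟩
  rw [List.get_eq_getElem]
  have hnd : (fs0 q).dropLast.Nodup := (nd_fs0 q).sublist (List.dropLast_sublist _)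
  refine ⟨?_, ?_, novelty_of_dropLast_nodup _ hnd k hk⟩ <;>
  · have hk4 : k < 4*q+4 := by rwa [len_fs0] at hk
    by_cases h1 : k < q+1
    · rw [fs0_g1 q k h1]; simp
    by_cases h2 : k < 3*q+3
    · obtain ⟨j, hj, rfl⟩ : ∃ j, j < 2*q+2 ∧ k = q+1+j := ⟨k-(q+1), by omega, by omega⟩
      rw [fs0_g2 q j hj]
      rcases Nat.mod_two_eq_zero_or_one j with hp | hp
      · obtain ⟨m, rfl⟩ : ∃ m, j = 2*m := ⟨j/2, by omega⟩
        rw [lzF2_even]; simp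
      · obtain ⟨m, rfl⟩ : ∃ m, j = 2*m+1 := ⟨j/2, by omega⟩
        rw [lzF2_odd]
        first
        | (simp; done)
        | (refine Or.inr ?_
           have hmem := mem_take_of_getElem (fs0 q) (q+1+2*m) (q+1+(2*m+1))
             (by rw [len_fs0]; omega) (by omega)
           rw [fs0_g2 q (2*m) (by omega), lzF2_even] at hmem
           simpa using hmem)
    · obtain ⟨i, hi, rfl⟩ : ∃ i, i < q+1 ∧ k = 3*q+3+i := ⟨k-(3*q+3), by omega, by omega⟩
      rw [fs0_g3 q i hi]
      first
      | (simp; done)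
      | (refine Or.inr ?_
         have hmem := mem_take_of_getElem (fs0 q) (q+1+(2*i+1)) (3*q+3+i)
           (by rw [len_fs0]; omega) (by omega)
         rw [fs0_g2 q (2*i+1) (by omega), lzF2_odd] at hmem
         simpa using hmem)

theorem lzS (q : ℕ) : IsLZ78 ((fsS q).flatten) (fsS q) := by
  refine ⟨rfl, fun k hk => ?_⟩
  rw [List.get_eq_getElem]
  have hnd : (fsS q).dropLast.Nodup := by rw [dropLast_fsS]; exact nd_fsS' q
  refine ⟨?_, ?_, novelty_of_dropLast_nodup _ hnd k hk⟩ <;>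
  · have hk4 : k < 5*q+6 := by rwa [len_fsS] at hk
    by_cases h1 : k < q+1
    · rw [fsS_g1 q k h1]; simp
    by_cases h2 : k < 3*q+3
    · obtain ⟨j, hj, rfl⟩ : ∃ j, j < 2*q+2 ∧ k = q+1+j := ⟨k-(q+1), by omega, by omega⟩
      rw [fsS_g2 q j hj]
      rcases Nat.mod_two_eq_zero_or_one j with hp | hp
      · obtain ⟨m, rfl⟩ : ∃ m, j = 2*m := ⟨j/2, by omega⟩
        rw [lzF2_even]; simp
      · obtain ⟨m, rfl⟩ : ∃ m, j = 2*m+1 := ⟨j/2, by omega⟩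
        rw [lzF2_odd]
        first
        | (simp; done)
        | (refine Or.inr ?_
           have hmem := mem_take_of_getElem (fsS q) (q+1+2*m) (q+1+(2*m+1))
             (by rw [len_fsS]; omega) (by omega)
           rw [fsS_g2 q (2*m) (by omega), lzF2_even] at hmem
           simpa using hmem)
    by_cases h3 : k = 3*q+3
    · subst h3; rw [fsS_gd]; simp
    by_cases h4 : k < 5*q+5
    · obtain ⟨j, hj, rfl⟩ : ∃ j, j < 2*q+1 ∧ k = 3*q+4+j := ⟨k-(3*q+4), by omega, by omega⟩
      rw [fsS_gT q j hj]
      rcases Nat.mod_two_eq_zero_or_one j with hp | hp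
      · obtain ⟨m, rfl⟩ : ∃ m, j = 2*m := ⟨j/2, by omega⟩
        rw [lzG_even]; simp
      · obtain ⟨m, rfl⟩ : ∃ m, j = 2*m+1 := ⟨j/2, by omega⟩
        rw [lzG_odd]
        first
        | (simp; done)
        | (refine Or.inr ?_
           have hmem := mem_take_of_getElem (fsS q) m (3*q+4+(2*m+1))
             (by rw [len_fsS]; omega) (by omega)
           rw [fsS_g1 q m (by omega)] at hmem
           simpa using hmem)
    · obtain rfl : k = 5*q+5 := by omega
      rw [fsS_gl]; simp

theorem lzI (q : ℕ) : IsLZ78 ((fsI q).flatten) (fsI q) := by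
  refine ⟨rfl, fun k hk => ?_⟩
  rw [List.get_eq_getElem]
  have hnd : (fsI q).dropLast.Nodup := by rw [dropLast_fsI]; exact nd_fsI' q
  refine ⟨?_, ?_, novelty_of_dropLast_nodup _ hnd k hk⟩ <;>
  · have hk4 : k < 5*q+6 := by rwa [len_fsI] at hk
    by_cases h1 : k < q+1
    · rw [fsI_g1 q k h1]; simp
    by_cases h2 : k < 3*q+3
    · obtain ⟨j, hj, rfl⟩ : ∃ j, j < 2*q+2 ∧ k = q+1+j := ⟨k-(q+1), by omega, by omega⟩
      rw [fsI_g2 q j hj]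
      rcases Nat.mod_two_eq_zero_or_one j with hp | hp
      · obtain ⟨m, rfl⟩ : ∃ m, j = 2*m := ⟨j/2, by omega⟩
        rw [lzF2_even]; simp
      · obtain ⟨m, rfl⟩ : ∃ m, j = 2*m+1 := ⟨j/2, by omega⟩
        rw [lzF2_odd]
        first
        | (simp; done)
        | (refine Or.inr ?_
           have hmem := mem_take_of_getElem (fsI q) (q+1+2*m) (q+1+(2*m+1))
             (by rw [len_fsI]; omega) (by omega)
           rw [fsI_g2 q (2*m) (by omega), lzF2_even] at hmem
           simpa using hmem)
    by_cases h3 : k = 3*q+3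
    · subst h3; rw [fsI_gd]
      first
      | (simp; done)
      | (refine Or.inr ?_
         have hmem := mem_take_of_getElem (fsI q) (q+1+0) (3*q+3)
           (by rw [len_fsI]; omega) (by omega)
         rw [fsI_g2 q 0 (by omega)] at hmem
         have e0 : lzF2 0 = [1] := by simp [lzF2]
         rw [e0] at hmem
         simpa using hmem)
    by_cases h4 : k < 5*q+5
    · obtain ⟨j, hj, rfl⟩ : ∃ j, j < 2*q+1 ∧ k = 3*q+4+j := ⟨k-(3*q+4), by omega, by omega⟩
      rw [fsI_gT q j hj]
      rcases Nat.mod_two_eq_zero_or_one j with hp | hp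
      · obtain ⟨m, rfl⟩ : ∃ m, j = 2*m := ⟨j/2, by omega⟩
        rw [lzG_even]; simp
      · obtain ⟨m, rfl⟩ : ∃ m, j = 2*m+1 := ⟨j/2, by omega⟩
        rw [lzG_odd]
        first
        | (simp; done)
        | (refine Or.inr ?_
           have hmem := mem_take_of_getElem (fsI q) m (3*q+4+(2*m+1))
             (by rw [len_fsI]; omega) (by omega)
           rw [fsI_g1 q m (by omega)] at hmem
           simpa using hmem)
    · obtain rfl : k = 5*q+5 := by omega
      rw [fsI_gl]; simp

theorem lzD (q : ℕ) : IsLZ78 ((fsD q).flatten) (fsD q) := by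
  refine ⟨rfl, fun k hk => ?_⟩
  rw [List.get_eq_getElem]
  have hnd : (fsD q).dropLast.Nodup := by rw [dropLast_fsD]; exact nd_fsD' q
  refine ⟨?_, ?_, novelty_of_dropLast_nodup _ hnd k hk⟩ <;>
  · have hk4 : k < 5*q+5 := by rwa [len_fsD] at hk
    by_cases h1 : k < q+1
    · rw [fsD_g1 q k h1]; simp
    by_cases h2 : k < 3*q+3
    · obtain ⟨j, hj, rfl⟩ : ∃ j, j < 2*q+2 ∧ k = q+1+j := ⟨k-(q+1), by omega, by omega⟩
      rw [fsD_g2 q j hj]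
      rcases Nat.mod_two_eq_zero_or_one j with hp | hp
      · obtain ⟨m, rfl⟩ : ∃ m, j = 2*m := ⟨j/2, by omega⟩
        rw [lzF2_even]; simp
      · obtain ⟨m, rfl⟩ : ∃ m, j = 2*m+1 := ⟨j/2, by omega⟩
        rw [lzF2_odd]
        first
        | (simp; done)
        | (refine Or.inr ?_
           have hmem := mem_take_of_getElem (fsD q) (q+1+2*m) (q+1+(2*m+1))
             (by rw [len_fsD]; omega) (by omega)
           rw [fsD_g2 q (2*m) (by omega), lzF2_even] at hmem
           simpa using hmem)
    by_cases h4 : k < 5*q+4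
    · obtain ⟨j, hj, rfl⟩ : ∃ j, j < 2*q+1 ∧ k = 3*q+3+j := ⟨k-(3*q+3), by omega, by omega⟩
      rw [fsD_gT q j hj]
      rcases Nat.mod_two_eq_zero_or_one j with hp | hp
      · obtain ⟨m, rfl⟩ : ∃ m, j = 2*m := ⟨j/2, by omega⟩
        rw [lzG_even]; simp
      · obtain ⟨m, rfl⟩ : ∃ m, j = 2*m+1 := ⟨j/2, by omega⟩
        rw [lzG_odd]
        first
        | (simp; done)
        | (refine Or.inr ?_
           have hmem := mem_take_of_getElem (fsD q) m (3*q+3+(2*m+1))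
             (by rw [len_fsD]; omega) (by omega)
           rw [fsD_g1 q m (by omega)] at hmem
           simpa using hmem)
    · obtain rfl : k = 5*q+4 := by omega
      rw [fsD_gl]; simp

def uu (q : ℕ) : List ℕ := (seg1 q).flatten ++ (seg2 q).flatten
def vv (q : ℕ) : List ℕ := (segT q).flatten ++ [3*q+3]

theorem flat0 (q : ℕ) : (fs0 q).flatten = uu q ++ 1 :: vv q := by
  simp [fs0, uu, vv, List.flatten_append, seg3_eq]

theorem flatS (q : ℕ) : (fsS q).flatten = uu q ++ 0 :: vv q := by
  simp [fsS, uu, vv, List.flatten_append]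

theorem flatI (q : ℕ) : (fsI q).flatten = uu q ++ 1 :: 1 :: vv q := by
  simp [fsI, uu, vv, List.flatten_append]

theorem flatD (q : ℕ) : (fsD q).flatten = uu q ++ vv q := by
  simp [fsD, uu, vv, List.flatten_append]

theorem len_seg1_flatten (q : ℕ) : ((seg1 q).flatten).length = q+1 := by
  induction q with
  | zero => simp [seg1, List.range_succ]
  | succ q ih =>
    rw [seg1, show q+1+1 = (q+1)+1 from rfl, List.range_succ]
    rw [List.map_append, List.flatten_append]
    rw [show (List.map (fun i => [3*i+3]) (List.range (q+1))).flatten = (seg1 q).flatten from rfl]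
    simp [ih]

theorem len_seg2_flatten (q : ℕ) : ((seg2 q).flatten).length = 3*q+3 := by
  induction q with
  | zero =>
    have e0 : lzF2 0 = [1] := by simp [lzF2]
    have e1 : lzF2 1 = [1,2] := by simp [lzF2]
    simp [seg2, List.range_succ, e0, e1]
  | succ q ih =>
    rw [seg2, show 2*(q+1)+2 = (2*q+2)+2 from by ring, range_add2]
    rw [List.map_append, List.flatten_append]
    rw [show (List.map lzF2 (List.range (2*q+2))).flatten = (seg2 q).flatten from rfl]
    have e0 : lzF2 (2*q+2) = [3*(q+1)+1] := by
      rw [show 2*q+2 = 2*(q+1) from by ring, lzF2_even]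
    have e1 : lzF2 (2*q+2+1) = [3*(q+1)+1, 3*(q+1)+2] := by
      rw [show 2*q+2+1 = 2*(q+1)+1 from by ring, lzF2_odd]
    simp [e0, e1, ih]
    omega

theorem len_uu (q : ℕ) : (uu q).length = 4*q+4 := by
  rw [uu, List.length_append, len_seg1_flatten, len_seg2_flatten]; omega

theorem len_vv (q : ℕ) : (vv q).length = 3*q+2 := by
  simp [vv, segT_flatten]

/-- The additive sensitivity of LZ78 is `Ω(n)` for every edit operation: for every
`p ≥ 1` there are strings `T` of length `n = 7p` and `T'` at edit distance `1`
(for each of substitution, insertion, and deletion) with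
`z_78(T') − z_78(T) ≥ p = n / 7`. -/
theorem stmt12 (p : ℕ) (hp : 1 ≤ p) :
    (∃ (u v : List ℕ) (a b : ℕ) (fs fs' : List (List ℕ)), a ≠ b ∧
      (u ++ a :: v).length = 7 * p ∧
      IsLZ78 (u ++ a :: v) fs ∧ IsLZ78 (u ++ b :: v) fs' ∧
      fs.length + (7 * p) / 7 ≤ fs'.length) ∧
    (∃ (u v : List ℕ) (b : ℕ) (fs fs' : List (List ℕ)),
      (u ++ v).length = 7 * p ∧
      IsLZ78 (u ++ v) fs ∧ IsLZ78 (u ++ b :: v) fs' ∧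
      fs.length + (7 * p) / 7 ≤ fs'.length) ∧
    (∃ (u v : List ℕ) (a : ℕ) (fs fs' : List (List ℕ)),
      (u ++ a :: v).length = 7 * p ∧
      IsLZ78 (u ++ a :: v) fs ∧ IsLZ78 (u ++ v) fs' ∧
      fs.length + (7 * p) / 7 ≤ fs'.length) := by
  obtain ⟨q, rfl⟩ : ∃ q, p = q + 1 := ⟨p - 1, by omega⟩
  have hT : (uu q ++ 1 :: vv q).length = 7 * (q+1) := by
    simp [len_uu q, len_vv q]; omega
  refine ⟨⟨uu q, vv q, 1, 0, fs0 q, fsS q, by omega, hT, ?_, ?_, ?_⟩,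
          ⟨uu q ++ [1], vv q, 1, fs0 q, fsI q, ?_, ?_, ?_, ?_⟩,
          ⟨uu q, vv q, 1, fs0 q, fsD q, hT, ?_, ?_, ?_⟩⟩
  · rw [← flat0 q]; exact lz0 q
  · rw [← flatS q]; exact lzS q
  · rw [len_fs0, len_fsS]; omega
  · rw [List.append_assoc]; simpa using hT
  · rw [List.append_assoc, List.singleton_append, ← flat0 q]; exact lz0 q
  · rw [List.append_assoc, List.singleton_append, ← flatI q]; exact lzI q
  · rw [len_fs0, len_fsI]; omega
  · rw [← flat0 q]; exact lz0 q
  · rw [← flatD q]; exact lzD q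
  · rw [len_fs0, len_fsD]; omega
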